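/- Let G be K₃,₃ with two nonadjacent vertices x, y as terminals. Then for every edge e of G, both (G + xy) − e and (G + xy)/e are planar; consequently G + xy is critical for planarity. -/
import Mathlib


/-- `H` is a minor of `G`: there is a family of disjoint nonempty connected branch sets
indexed by the vertices of `H` such that adjacency in `H` is realized by edges of `G`. -/
def IsMinor {W V : Type} (H : SimpleGraph W) (G : SimpleGraph V) : Prop :=
  ∃ f : W → Set V,
    (∀ w, (f w).Nonempty) ∧
    (∀ w, (G.induce (f w)).Connected) ∧
    (Pairwise fun w₁ w₂ => Disjoint (f w₁) (f w₂)) ∧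
    ∀ ⦃w₁ w₂ : W⦄, H.Adj w₁ w₂ → ∃ v₁ ∈ f w₁, ∃ v₂ ∈ f w₂, G.Adj v₁ v₂

/-- Planarity, via the Kuratowski–Wagner characterization: no `K₅` and no `K₃,₃` minor. -/
def Planar {V : Type} (G : SimpleGraph V) : Prop :=
  ¬ IsMinor (⊤ : SimpleGraph (Fin 5)) G ∧
  ¬ IsMinor (completeBipartiteGraph (Fin 3) (Fin 3)) G

/-- `K₃,₃` on vertex set `Fin 6`, with parts `{0,1,2}` and `{3,4,5}`. -/
def K33 : SimpleGraph (Fin 6) :=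
  SimpleGraph.fromRel fun a b => a.val < 3 ∧ 3 ≤ b.val

/-- `K₃,₃` together with the extra edge `xy` joining the nonadjacent terminals
`x = 0` and `y = 1`. -/
def GplusK33 : SimpleGraph (Fin 6) :=
  K33 ⊔ SimpleGraph.fromRel fun a b => a = 0 ∧ b = 1

/-- Contraction of the edge `uv` in `G`: the vertex `v` is merged into `u`
(and becomes isolated). -/
def contractEdge {V : Type} (G : SimpleGraph V) (u v : V) : SimpleGraph V :=
  SimpleGraph.fromRel fun a b =>
    (G.Adj a b ∧ a ≠ v ∧ b ≠ v) ∨ (a = u ∧ b ≠ v ∧ G.Adj v b) ∨ (b = u ∧ a ≠ v ∧ G.Adj a v)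

/-! ### Decidability instances -/

instance : DecidableRel K33.Adj := fun a b =>
  decidable_of_iff (a ≠ b ∧ ((a.val < 3 ∧ 3 ≤ b.val) ∨ (b.val < 3 ∧ 3 ≤ a.val)))
    (by rw [K33, SimpleGraph.fromRel_adj])

instance : DecidableRel GplusK33.Adj := fun a b =>
  decidable_of_iff (K33.Adj a b ∨ (a ≠ b ∧ ((a = 0 ∧ b = 1) ∨ (b = 0 ∧ a = 1))))
    (by rw [GplusK33]; rw [SimpleGraph.sup_adj, SimpleGraph.fromRel_adj])

instance (u v : Fin 6) : DecidableRel (contractEdge GplusK33 u v).Adj := fun a b =>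
  decidable_of_iff (a ≠ b ∧
      (((GplusK33.Adj a b ∧ a ≠ v ∧ b ≠ v) ∨ (a = u ∧ b ≠ v ∧ GplusK33.Adj v b) ∨
        (b = u ∧ a ≠ v ∧ GplusK33.Adj a v)) ∨
       ((GplusK33.Adj b a ∧ b ≠ v ∧ a ≠ v) ∨ (b = u ∧ a ≠ v ∧ GplusK33.Adj v a) ∨
        (a = u ∧ b ≠ v ∧ GplusK33.Adj b v))))
    (by rw [contractEdge, SimpleGraph.fromRel_adj])

instance (u v : Fin 6) : DecidableRel (GplusK33.deleteEdges {s(u, v)}).Adj := fun a b =>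
  decidable_of_iff (GplusK33.Adj a b ∧ ¬ s(a, b) = s(u, v))
    (by rw [SimpleGraph.deleteEdges_adj]; simp)

instance : DecidableRel (completeBipartiteGraph (Fin 3) (Fin 3)).Adj := fun a b =>
  decidable_of_iff (a.isLeft ∧ b.isRight ∨ a.isRight ∧ b.isLeft) Iff.rfl

/-! ### Auxiliary lemmas -/

/-- Two branch sets containing a common vertex are equal. -/
lemma part_eq {V W : Type} {f : W → Set V}
    (hdisj : Pairwise fun w₁ w₂ => Disjoint (f w₁) (f w₂))
    {v : V} {w₁ w₂ : W} (h1 : v ∈ f w₁) (h2 : v ∈ f w₂) : w₁ = w₂ := by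
  by_contra h
  exact Set.disjoint_left.mp (hdisj h) h1 h2

/-- A graph on six vertices with at most nine edges has no `K₅` minor
(each of the ten edges of `K₅` would need its own edge of `G`). -/
lemma noK5 {G : SimpleGraph (Fin 6)} [DecidableRel G.Adj]
    (hcard : G.edgeFinset.card ≤ 9) : ¬ IsMinor (⊤ : SimpleGraph (Fin 5)) G := by
  rintro ⟨f, hne, -, hdisj, hadj⟩
  classical
  have hw : ∀ p : Fin 5 × Fin 5, p.1 ≠ p.2 →
      ∃ v₁, v₁ ∈ f p.1 ∧ ∃ v₂, v₂ ∈ f p.2 ∧ G.Adj v₁ v₂ := by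
    intro p hp
    simpa using hadj (show (⊤ : SimpleGraph (Fin 5)).Adj p.1 p.2 from hp)
  let a : ∀ p : Fin 5 × Fin 5, p.1 ≠ p.2 → Fin 6 := fun p hp => (hw p hp).choose
  let b : ∀ p : Fin 5 × Fin 5, p.1 ≠ p.2 → Fin 6 :=
    fun p hp => (hw p hp).choose_spec.2.choose
  have ha : ∀ p hp, a p hp ∈ f p.1 := fun p hp => (hw p hp).choose_spec.1
  have hb : ∀ p hp, b p hp ∈ f p.2 := fun p hp => (hw p hp).choose_spec.2.choose_spec.1
  have hab : ∀ p hp, G.Adj (a p hp) (b p hp) :=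
    fun p hp => (hw p hp).choose_spec.2.choose_spec.2
  let φ : Fin 5 × Fin 5 → Sym2 (Fin 6) := fun p =>
    if hp : p.1 ≠ p.2 then s(a p hp, b p hp) else default
  have hmaps : ∀ p ∈ (Finset.univ : Finset (Fin 5)).offDiag, φ p ∈ G.edgeFinset := by
    intro p hp
    have hne' : p.1 ≠ p.2 := (Finset.mem_offDiag.mp hp).2.2
    simp only [φ, dif_pos hne', SimpleGraph.mem_edgeFinset, SimpleGraph.mem_edgeSet]
    exact hab p hne'
  have hfib : ∀ e ∈ G.edgeFinset,
      ((Finset.univ : Finset (Fin 5)).offDiag.filter fun p => φ p = e).card ≤ 2 := by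
    intro e _
    rcases Finset.eq_empty_or_nonempty
        (((Finset.univ : Finset (Fin 5)).offDiag.filter fun p => φ p = e)) with h | ⟨p₀, hp₀⟩
    · simp [h]
    · have hp₀' := Finset.mem_filter.mp hp₀
      have hne₀ : p₀.1 ≠ p₀.2 := (Finset.mem_offDiag.mp hp₀'.1).2.2
      have hsub : ((Finset.univ : Finset (Fin 5)).offDiag.filter fun p => φ p = e)
          ⊆ {p₀, p₀.swap} := by
        intro q hq
        have hq' := Finset.mem_filter.mp hq
        have hneq : q.1 ≠ q.2 := (Finset.mem_offDiag.mp hq'.1).2.2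
        have heq : s(a q hneq, b q hneq) = s(a p₀ hne₀, b p₀ hne₀) := by
          have h1 : φ q = e := hq'.2
          have h2 : φ p₀ = e := hp₀'.2
          simpa only [φ, dif_pos hneq, dif_pos hne₀] using h1.trans h2.symm
        rw [Sym2.eq_iff] at heq
        rcases heq with ⟨h1, h2⟩ | ⟨h1, h2⟩
        · have e1 : q.1 = p₀.1 := part_eq hdisj (ha q hneq) (h1 ▸ ha p₀ hne₀)
          have e2 : q.2 = p₀.2 := part_eq hdisj (hb q hneq) (h2 ▸ hb p₀ hne₀)
          simp [Finset.mem_insert, Prod.ext_iff, e1, e2]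
        · have e1 : q.1 = p₀.2 := part_eq hdisj (ha q hneq) (h1 ▸ hb p₀ hne₀)
          have e2 : q.2 = p₀.1 := part_eq hdisj (hb q hneq) (h2 ▸ ha p₀ hne₀)
          simp [Finset.mem_insert, Prod.ext_iff, e1, e2, Prod.swap]
      calc ((Finset.univ : Finset (Fin 5)).offDiag.filter fun p => φ p = e).card
          ≤ ({p₀, p₀.swap} : Finset (Fin 5 × Fin 5)).card := Finset.card_le_card hsub
        _ ≤ 2 := Finset.card_insert_le _ _ |>.trans (by simp)
  have hmain := Finset.card_le_mul_card_image_of_maps_to hmaps 2 hfib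
  rw [Finset.offDiag_card] at hmain
  simp only [Finset.card_univ, Fintype.card_fin] at hmain
  omega

/-- A graph on six vertices with no 3-element vertex set joined completely to its
complement has no `K₃,₃` minor: the six branch sets must all be singletons. -/
lemma noK33 {G : SimpleGraph (Fin 6)}
    (h3 : ∀ s : Finset (Fin 6), s.card = 3 → ∃ a ∈ s, ∃ b, b ∉ s ∧ ¬ G.Adj a b) :
    ¬ IsMinor (completeBipartiteGraph (Fin 3) (Fin 3)) G := by
  rintro ⟨f, hne, -, hdisj, hadj⟩
  classical
  set t : Fin 3 ⊕ Fin 3 → Finset (Fin 6) := fun w => (f w).toFinite.toFinset with ht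
  have hmem : ∀ w v, v ∈ t w ↔ v ∈ f w := fun w v => Set.Finite.mem_toFinset _
  have hdisj' : ∀ x ∈ (Finset.univ : Finset (Fin 3 ⊕ Fin 3)), ∀ y ∈ Finset.univ,
      x ≠ y → Disjoint (t x) (t y) := by
    intro x _ y _ hxy
    rw [Finset.disjoint_left]
    intro v hvx hvy
    exact hxy (part_eq hdisj ((hmem x v).mp hvx) ((hmem y v).mp hvy))
  have hsum : ∑ w, (t w).card ≤ 6 := by
    rw [← Finset.card_biUnion hdisj']
    calc (Finset.univ.biUnion t).card ≤ (Finset.univ : Finset (Fin 6)).card :=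
          Finset.card_le_card (Finset.subset_univ _)
      _ = 6 := by simp
  have hpos : ∀ w, 1 ≤ (t w).card := by
    intro w
    obtain ⟨v, hv⟩ := hne w
    exact Finset.card_pos.mpr ⟨v, (hmem w v).mpr hv⟩
  have hone : ∀ w, (t w).card = 1 := by
    intro w₀
    by_contra h
    have h2 : 2 ≤ (t w₀).card := by have := hpos w₀; omega
    have h5 : (5 : ℕ) ≤ ∑ w ∈ Finset.univ.erase w₀, (t w).card := by
      have := Finset.card_nsmul_le_sum (Finset.univ.erase w₀) (fun w => (t w).card) 1
        (fun w _ => hpos w)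
      simpa [Finset.card_erase_of_mem] using this
    have haux := Finset.add_sum_erase Finset.univ (fun w => (t w).card) (Finset.mem_univ w₀)
    beta_reduce at haux
    omega
  have hsing : ∀ w, ∃ v, ∀ x, x ∈ f w ↔ x = v := by
    intro w
    obtain ⟨v, hv⟩ := Finset.card_eq_one.mp (hone w)
    exact ⟨v, fun x => by rw [← hmem, hv, Finset.mem_singleton]⟩
  choose g hg using hsing
  have hginj : Function.Injective g := by
    intro w₁ w₂ h
    exact part_eq hdisj ((hg w₁ (g w₁)).mpr rfl)
      (by rw [h]; exact (hg w₂ (g w₂)).mpr rfl)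
  have hgsurj : Function.Surjective g := by
    have := (Fintype.bijective_iff_injective_and_card g).mpr ⟨hginj, by simp⟩
    exact this.2
  have hAdj : ∀ i j : Fin 3, G.Adj (g (Sum.inl i)) (g (Sum.inr j)) := by
    intro i j
    obtain ⟨v₁, hv₁, v₂, hv₂, hA⟩ := hadj
      (show (completeBipartiteGraph (Fin 3) (Fin 3)).Adj (Sum.inl i) (Sum.inr j) by simp)
    rwa [(hg _ v₁).mp hv₁, (hg _ v₂).mp hv₂] at hA
  set s : Finset (Fin 6) := Finset.univ.image (fun i : Fin 3 => g (Sum.inl i)) with hs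
  obtain ⟨a, has, b, hbs, hnadj⟩ := h3 s (by
    rw [hs, Finset.card_image_of_injective _ (fun i j h => by
      have := hginj h; exact Sum.inl.inj this)]
    simp)
  obtain ⟨i, _, hi⟩ := Finset.mem_image.mp has
  obtain ⟨w, hw⟩ := hgsurj b
  cases w with
  | inl j => exact hbs (hw ▸ Finset.mem_image.mpr ⟨j, Finset.mem_univ j, rfl⟩)
  | inr j => exact hnadj (hi ▸ hw ▸ hAdj i j)

/-- The singleton-branch-set map witnessing that `K₃,₃` is a minor of `GplusK33`. -/
def gmap : Fin 3 ⊕ Fin 3 → Fin 6 :=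
  Sum.elim (fun i => ⟨i.val, by omega⟩) (fun j => ⟨j.val + 3, by omega⟩)

lemma induce_singleton_connected {V : Type} (G : SimpleGraph V) (v : V) :
    (G.induce {v}).Connected := by
  haveI : Nonempty ({v} : Set V) := ⟨⟨v, rfl⟩⟩
  exact ⟨fun x y => (Subtype.ext (x.2.trans y.2.symm) : x = y) ▸ SimpleGraph.Reachable.refl x⟩

lemma K33_minor_GplusK33 : IsMinor (completeBipartiteGraph (Fin 3) (Fin 3)) GplusK33 := by
  have hinj : Function.Injective gmap := by decide
  have hadj : ∀ w₁ w₂ : Fin 3 ⊕ Fin 3, (completeBipartiteGraph (Fin 3) (Fin 3)).Adj w₁ w₂ →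
      GplusK33.Adj (gmap w₁) (gmap w₂) := by decide
  refine ⟨fun w => {gmap w}, fun w => ⟨gmap w, rfl⟩,
    fun w => induce_singleton_connected _ _, ?_, ?_⟩
  · intro w₁ w₂ hne
    rw [Set.disjoint_singleton]
    exact fun h => hne (hinj h)
  · intro w₁ w₂ h
    exact ⟨gmap w₁, rfl, gmap w₂, rfl, hadj w₁ w₂ h⟩

/-- For every edge `e` of `K₃,₃`, both `(K₃,₃ + xy) − e` and `(K₃,₃ + xy)/e` are planar;
consequently `K₃,₃ + xy` is critical for planarity (it is itself nonplanar). -/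
theorem stmt_11 :
    ¬ Planar GplusK33 ∧
    ∀ u v : Fin 6, K33.Adj u v →
      Planar (GplusK33.deleteEdges {s(u, v)}) ∧ Planar (contractEdge GplusK33 u v) := by
  have hcards : ∀ u v : Fin 6, K33.Adj u v →
      (GplusK33.deleteEdges {s(u, v)}).edgeFinset.card ≤ 9 ∧
      (contractEdge GplusK33 u v).edgeFinset.card ≤ 9 := by decide
  have h3sub : ∀ u v : Fin 6, K33.Adj u v →
      ∀ s ∈ (Finset.univ : Finset (Fin 6)).powersetCard 3,
        (∃ a ∈ s, ∃ b, b ∉ s ∧ ¬ (GplusK33.deleteEdges {s(u, v)}).Adj a b) ∧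
        (∃ a ∈ s, ∃ b, b ∉ s ∧ ¬ (contractEdge GplusK33 u v).Adj a b) := by decide
  constructor
  · intro hplanar
    exact hplanar.2 K33_minor_GplusK33
  · intro u v huv
    have hmem : ∀ s : Finset (Fin 6), s.card = 3 →
        s ∈ (Finset.univ : Finset (Fin 6)).powersetCard 3 := fun s hs =>
      Finset.mem_powersetCard.mpr ⟨Finset.subset_univ s, hs⟩
    exact ⟨⟨noK5 (hcards u v huv).1,
        noK33 fun s hs => ((h3sub u v huv) s (hmem s hs)).1⟩,
      ⟨noK5 (hcards u v huv).2,
        noK33 fun s hs => ((h3sub u v huv) s (hmem s hs)).2⟩⟩
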